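/- arXiv:1403.8042 — 2 statements merged into one kernel-verified Lean document; each statement's English description precedes it below -/
import Mathlib

section
/- Let X and Y be independent exponentially distributed random variables with means Ω_X > 0 and Ω_Y > 0, and let δ1, δ2, x0, y0 > 0 with δ2·y0 > δ1·x0. Define P_{R,st}(x,y) = max{δ1/y, δ2/x} for x ≥ x0 and y ≥ y0, and P_{R,st}(x,y) = 0 otherwise. Then the maximum average relay output power equals E[P_{R,st}(X,Y)] = (δ2/Ω_X)·e^{−y0/Ω_Y}·[E1(x0/Ω_X) − E1(δ2·y0/(δ1·Ω_X))] + (δ1/Ω_Y + δ2/Ω_X)·E1(y0/Ω_Y + δ2·y0/(δ1·Ω_X)), where E1(z) = ∫_z^{∞}(e^{−t}/t) dt. -/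
open MeasureTheory ProbabilityTheory

/-- The exponential integral `E1(z) = ∫_z^∞ e^{-t}/t dt`. -/
noncomputable def expInt (z : ℝ) : ℝ := ∫ t in Set.Ioi z, Real.exp (-t) / t

section Helpers
open scoped ENNReal NNReal
open Set Real
set_option maxHeartbeats 1000000


lemma integral_exp_neg_mul_Ioi {r : ℝ} (hr : 0 < r) (u : ℝ) :
    ∫ x in Ioi u, Real.exp (-(r * x)) = Real.exp (-(r * u)) / r := by
  have h := integral_comp_mul_left_Ioi (fun t => Real.exp (-t)) u hr
  simp only [smul_eq_mul, integral_exp_neg_Ioi] at h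
  rw [h]; field_simp

lemma integral_exp_div_Ioi {r : ℝ} (hr : 0 < r) (u : ℝ) :
    ∫ x in Ioi u, Real.exp (-(r * x)) / x = expInt (r * u) := by
  have h := integral_comp_mul_left_Ioi (fun t => Real.exp (-t) / t) u hr
  simp only [smul_eq_mul] at h
  have : ∀ x : ℝ, Real.exp (-(r * x)) / (r * x) = r⁻¹ * (Real.exp (-(r * x)) / x) := by
    intro x; rcases eq_or_ne x 0 with h0 | h0
    · simp [h0]
    · field_simp
  simp only [this] at h
  rw [integral_const_mul] at h
  exact mul_left_cancel₀ (inv_ne_zero hr.ne') h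

lemma integrableOn_exp_div {r u : ℝ} (hr : 0 < r) (hu : 0 < u) :
    IntegrableOn (fun x => Real.exp (-(r * x)) / x) (Ioi u) := by
  refine Integrable.mono' ((exp_neg_integrableOn_Ioi u hr).div_const u) ?_ ?_
  · exact (((measurable_const.mul measurable_id).neg.exp.div measurable_id)).aestronglyMeasurable
  · filter_upwards [ae_restrict_mem measurableSet_Ioi] with x hx
    have hx0 : 0 < x := hu.trans hx
    rw [Real.norm_eq_abs, abs_of_nonneg (by positivity), neg_mul]
    exact div_le_div_of_nonneg_left (exp_pos _).le hu (le_of_lt hx)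

lemma integral_exp_div_Ioc {r u v : ℝ} (hr : 0 < r) (hu : 0 < u) (huv : u ≤ v) :
    ∫ x in Ioc u v, Real.exp (-(r * x)) / x = expInt (r * u) - expInt (r * v) := by
  have hsplit : Ioc u v ∪ Ioi v = Ioi u := Ioc_union_Ioi_eq_Ioi huv
  have hint : IntegrableOn (fun x => Real.exp (-(r * x)) / x) (Ioi u) :=
    integrableOn_exp_div hr hu
  have h1 : IntegrableOn (fun x => Real.exp (-(r * x)) / x) (Ioc u v) :=
    hint.mono_set (by rw [← hsplit]; exact subset_union_left)
  have h2 : IntegrableOn (fun x => Real.exp (-(r * x)) / x) (Ioi v) :=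
    hint.mono_set (by rw [← hsplit]; exact subset_union_right)
  have := setIntegral_union (Ioc_disjoint_Ioi le_rfl) measurableSet_Ioi h1 h2
  rw [hsplit, integral_exp_div_Ioi hr u, integral_exp_div_Ioi hr v] at this
  linarith

lemma exponentialPDFReal_eq' (r x : ℝ) :
    exponentialPDFReal r x = if 0 ≤ x then r * Real.exp (-(r * x)) else 0 := by
  rw [exponentialPDFReal, gammaPDFReal]
  simp only [rpow_one, Real.Gamma_one, div_one, sub_self, rpow_zero, mul_one]

lemma integral_expMeasure {r : ℝ} (hr : 0 < r) (g : ℝ → ℝ) :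
    ∫ x, g x ∂(expMeasure r) = ∫ x in Ioi 0, (r * Real.exp (-(r * x))) * g x := by
  have hpdf : expMeasure r = volume.withDensity
      (fun x => ((exponentialPDFReal r x).toNNReal : ℝ≥0∞)) := by
    rfl
  rw [hpdf, integral_withDensity_eq_integral_smul
    ((measurable_exponentialPDFReal r).real_toNNReal) g]
  have h1 : ∀ x : ℝ, (exponentialPDFReal r x).toNNReal • g x
      = (if 0 ≤ x then r * Real.exp (-(r * x)) else 0) * g x := by
    intro x
    rw [NNReal.smul_def, smul_eq_mul, Real.coe_toNNReal _ (exponentialPDFReal_nonneg hr x),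
      exponentialPDFReal_eq']
  simp only [h1]
  rw [← setIntegral_eq_integral_of_forall_compl_eq_zero
    (s := Ici (0:ℝ)) (fun x hx => by rw [if_neg (by simpa using hx), zero_mul]),
    integral_Ici_eq_integral_Ioi]
  refine setIntegral_congr_fun measurableSet_Ioi fun x hx => ?_
  rw [if_pos (le_of_lt hx)]

lemma expMeasure_tail {r t C : ℝ} (hr : 0 < r) (ht : 0 < t) :
    ∫ x, (if t ≤ x then C else 0) ∂(expMeasure r) = C * Real.exp (-(r * t)) := by
  rw [integral_expMeasure hr]
  have h1 : ∀ x : ℝ, (r * Real.exp (-(r * x))) * (if t ≤ x then C else 0)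
      = Set.indicator (Ici t) (fun x => (r * C) * Real.exp (-(r * x))) x := by
    intro x
    rw [Set.indicator_apply]
    simp only [mem_Ici]
    split_ifs <;> ring
  simp only [h1]
  rw [setIntegral_indicator measurableSet_Ici]
  have h2 : Ioi (0:ℝ) ∩ Ici t = Ici t :=
    inter_eq_right.mpr (fun x (hx : t ≤ x) => lt_of_lt_of_le ht hx)
  rw [h2, integral_Ici_eq_integral_Ioi, integral_const_mul, integral_exp_neg_mul_Ioi hr]
  field_simp

lemma expMeasure_tail_lt {r t C : ℝ} (hr : 0 < r) (ht : 0 < t) :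
    ∫ x, (if t < x then C else 0) ∂(expMeasure r) = C * Real.exp (-(r * t)) := by
  rw [integral_expMeasure hr]
  have h1 : ∀ x : ℝ, (r * Real.exp (-(r * x))) * (if t < x then C else 0)
      = Set.indicator (Ioi t) (fun x => (r * C) * Real.exp (-(r * x))) x := by
    intro x
    rw [Set.indicator_apply]
    simp only [mem_Ioi]
    split_ifs <;> ring
  simp only [h1]
  rw [setIntegral_indicator measurableSet_Ioi]
  have h2 : Ioi (0:ℝ) ∩ Ioi t = Ioi t :=
    inter_eq_right.mpr (fun x (hx : t < x) => ht.trans hx)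
  rw [h2, integral_const_mul, integral_exp_neg_mul_Ioi hr]
  field_simp


lemma outerA {a b δ1 δ2 y0 : ℝ} (ha : 0 < a) (hb : 0 < b) (hδ1 : 0 < δ1) (hδ2 : 0 < δ2)
    (hy0 : 0 < y0) :
    ∫ y, (if y0 ≤ y then (δ1 / y) * Real.exp (-(a * (δ2 * y / δ1))) else 0) ∂(expMeasure b)
      = b * δ1 * expInt ((b + a * δ2 / δ1) * y0) := by
  rw [integral_expMeasure hb]
  have hk : 0 < b + a * δ2 / δ1 := by positivity
  have h1 : ∀ y : ℝ, (b * Real.exp (-(b * y)))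
        * (if y0 ≤ y then (δ1 / y) * Real.exp (-(a * (δ2 * y / δ1))) else 0)
      = Set.indicator (Ici y0)
          (fun y => (b * δ1) * (Real.exp (-((b + a * δ2 / δ1) * y)) / y)) y := by
    intro y
    rw [Set.indicator_apply]
    simp only [mem_Ici]
    split_ifs
    · have : -((b + a * δ2 / δ1) * y) = -(b * y) + -(a * (δ2 * y / δ1)) := by
        field_simp; ring
      rw [this, Real.exp_add]; ring
    · ring
  simp only [h1]
  rw [setIntegral_indicator measurableSet_Ici]
  have h2 : Ioi (0:ℝ) ∩ Ici y0 = Ici y0 :=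
    inter_eq_right.mpr (fun x (hx : y0 ≤ x) => lt_of_lt_of_le hy0 hx)
  rw [h2, integral_Ici_eq_integral_Ioi, integral_const_mul, integral_exp_div_Ioi hk]

lemma outerB {a b δ1 δ2 x0 y0 : ℝ} (ha : 0 < a) (hb : 0 < b) (hδ1 : 0 < δ1) (hδ2 : 0 < δ2)
    (hx0 : 0 < x0) (hy0 : 0 < y0) (hreg : δ1 * x0 < δ2 * y0) :
    ∫ x, (if x0 ≤ x then (δ2 / x) * Real.exp (-(b * max y0 (δ1 * x / δ2))) else 0)
        ∂(expMeasure a)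
      = a * δ2 * Real.exp (-(b * y0)) * (expInt (a * x0) - expInt (a * (δ2 * y0 / δ1)))
        + a * δ2 * expInt ((a + b * δ1 / δ2) * (δ2 * y0 / δ1)) := by
  rw [integral_expMeasure ha]
  set c : ℝ := δ2 * y0 / δ1 with hc
  have hx0c : x0 < c := (lt_div_iff₀' hδ1).mpr hreg
  have hcpos : 0 < c := hx0.trans hx0c
  have hk : 0 < a + b * δ1 / δ2 := by positivity
  -- reduce to integral over Ioi x0
  have h1 : ∀ x : ℝ, (a * Real.exp (-(a * x)))
        * (if x0 ≤ x then (δ2 / x) * Real.exp (-(b * max y0 (δ1 * x / δ2))) else 0)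
      = Set.indicator (Ici x0)
          (fun x => (a * δ2) * (Real.exp (-(a * x)) / x
            * Real.exp (-(b * max y0 (δ1 * x / δ2))))) x := by
    intro x
    rw [Set.indicator_apply]
    simp only [mem_Ici]
    split_ifs
    · ring
    · ring
  simp only [h1]
  rw [setIntegral_indicator measurableSet_Ici]
  have h2 : Ioi (0:ℝ) ∩ Ici x0 = Ici x0 :=
    inter_eq_right.mpr (fun x (hx : x0 ≤ x) => lt_of_lt_of_le hx0 hx)
  rw [h2, integral_Ici_eq_integral_Ioi, integral_const_mul]
  -- split the domain
  have hsplit : Ioc x0 c ∪ Ioi c = Ioi x0 := Ioc_union_Ioi_eq_Ioi hx0c.le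
  have hintOn : IntegrableOn
      (fun x => Real.exp (-(a * x)) / x * Real.exp (-(b * max y0 (δ1 * x / δ2))))
      (Ioi x0) := by
    refine Integrable.mono' (integrableOn_exp_div ha hx0) ?_ ?_
    · refine AEStronglyMeasurable.mul ?_ ?_
      · exact (((measurable_const.mul measurable_id).neg.exp.div
          measurable_id)).aestronglyMeasurable
      · exact ((measurable_const.mul
          (measurable_const.max ((measurable_id.const_mul δ1).div_const δ2))).neg.exp
          ).aestronglyMeasurable
    · filter_upwards [ae_restrict_mem measurableSet_Ioi] with x hx
      have hxpos : 0 < x := hx0.trans hx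
      have e1 : 0 ≤ Real.exp (-(a * x)) / x := by positivity
      rw [Real.norm_eq_abs, abs_of_nonneg (by positivity)]
      calc Real.exp (-(a * x)) / x * Real.exp (-(b * max y0 (δ1 * x / δ2)))
          ≤ Real.exp (-(a * x)) / x * 1 := by
            refine mul_le_mul_of_nonneg_left ?_ e1
            rw [Real.exp_le_one_iff]
            have : 0 < max y0 (δ1 * x / δ2) := lt_max_of_lt_left hy0
            nlinarith
        _ = Real.exp (-(a * x)) / x := mul_one _
  have hi1 : IntegrableOn
      (fun x => Real.exp (-(a * x)) / x * Real.exp (-(b * max y0 (δ1 * x / δ2))))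
      (Ioc x0 c) := hintOn.mono_set Ioc_subset_Ioi_self
  have hi2 : IntegrableOn
      (fun x => Real.exp (-(a * x)) / x * Real.exp (-(b * max y0 (δ1 * x / δ2))))
      (Ioi c) := hintOn.mono_set (Ioi_subset_Ioi hx0c.le)
  rw [← hsplit, setIntegral_union (Ioc_disjoint_Ioi le_rfl) measurableSet_Ioi hi1 hi2]
  -- first piece
  have hp1 : ∫ x in Ioc x0 c,
      Real.exp (-(a * x)) / x * Real.exp (-(b * max y0 (δ1 * x / δ2)))
      = Real.exp (-(b * y0)) * (expInt (a * x0) - expInt (a * c)) := by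
    rw [← integral_exp_div_Ioc ha hx0 hx0c.le, ← integral_const_mul]
    refine setIntegral_congr_fun measurableSet_Ioc fun x hx => ?_
    have hmax : max y0 (δ1 * x / δ2) = y0 := by
      refine max_eq_left ((div_le_iff₀ hδ2).mpr ?_)
      have : δ1 * x ≤ δ1 * c := by nlinarith [hx.2]
      calc δ1 * x ≤ δ1 * c := this
        _ = δ2 * y0 := by rw [hc]; field_simp
        _ = y0 * δ2 := by ring
    rw [hmax]; ring
  -- second piece
  have hp2 : ∫ x in Ioi c,
      Real.exp (-(a * x)) / x * Real.exp (-(b * max y0 (δ1 * x / δ2)))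
      = expInt ((a + b * δ1 / δ2) * c) := by
    rw [← integral_exp_div_Ioi hk c]
    refine setIntegral_congr_fun measurableSet_Ioi fun x hx => ?_
    have hxc : c < x := hx
    have hmax : max y0 (δ1 * x / δ2) = δ1 * x / δ2 := by
      refine max_eq_right ((le_div_iff₀ hδ2).mpr ?_)
      have : δ1 * c ≤ δ1 * x := by nlinarith
      calc y0 * δ2 = δ1 * c := by rw [hc]; field_simp
        _ ≤ δ1 * x := this
    have harg : -((a + b * δ1 / δ2) * x) = -(a * x) + -(b * (δ1 * x / δ2)) := by
      field_simp; ring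
    rw [hmax, harg, Real.exp_add]
    ring
  rw [hp1, hp2]; ring


lemma main_prod {a b δ1 δ2 x0 y0 : ℝ} (ha : 0 < a) (hb : 0 < b) (hδ1 : 0 < δ1)
    (hδ2 : 0 < δ2) (hx0 : 0 < x0) (hy0 : 0 < y0) (hreg : δ1 * x0 < δ2 * y0) :
    ∫ p : ℝ × ℝ, (if x0 ≤ p.1 ∧ y0 ≤ p.2 then max (δ1 / p.2) (δ2 / p.1) else 0)
        ∂((expMeasure a).prod (expMeasure b))
      = a * δ2 * Real.exp (-(b * y0)) * (expInt (a * x0) - expInt (a * (δ2 * y0 / δ1)))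
        + a * δ2 * expInt ((a + b * δ1 / δ2) * (δ2 * y0 / δ1))
        + b * δ1 * expInt ((b + a * δ2 / δ1) * y0) := by
  haveI : IsProbabilityMeasure (expMeasure a) := isProbabilityMeasure_expMeasure ha
  haveI : IsProbabilityMeasure (expMeasure b) := isProbabilityMeasure_expMeasure hb
  set ν := (expMeasure a).prod (expMeasure b) with hν
  set FA : ℝ × ℝ → ℝ :=
    fun p => if x0 ≤ p.1 ∧ y0 ≤ p.2 ∧ δ2 * p.2 < δ1 * p.1 then δ1 / p.2 else 0 with hFA
  set FB : ℝ × ℝ → ℝ :=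
    fun p => if x0 ≤ p.1 ∧ y0 ≤ p.2 ∧ δ1 * p.1 ≤ δ2 * p.2 then δ2 / p.1 else 0 with hFB
  have hFAm : Measurable FA := by
    refine Measurable.ite ?_ (measurable_const.div measurable_snd) measurable_const
    refine MeasurableSet.inter (measurable_fst measurableSet_Ici) <|
      MeasurableSet.inter (measurable_snd measurableSet_Ici) ?_
    exact measurableSet_lt (measurable_snd.const_mul δ2) (measurable_fst.const_mul δ1)
  have hFBm : Measurable FB := by
    refine Measurable.ite ?_ (measurable_const.div measurable_fst) measurable_const
    refine MeasurableSet.inter (measurable_fst measurableSet_Ici) <|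
      MeasurableSet.inter (measurable_snd measurableSet_Ici) ?_
    exact measurableSet_le (measurable_fst.const_mul δ1) (measurable_snd.const_mul δ2)
  have hFAbd : ∀ p : ℝ × ℝ, ‖FA p‖ ≤ δ1 / y0 := by
    intro p
    simp only [hFA, Real.norm_eq_abs]
    split_ifs with h
    · have h2 : (0:ℝ) < p.2 := lt_of_lt_of_le hy0 h.2.1
      rw [abs_of_nonneg (div_nonneg hδ1.le h2.le)]
      exact div_le_div_of_nonneg_left hδ1.le hy0 h.2.1
    · rw [abs_zero]; positivity
  have hFBbd : ∀ p : ℝ × ℝ, ‖FB p‖ ≤ δ2 / x0 := by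
    intro p
    simp only [hFB, Real.norm_eq_abs]
    split_ifs with h
    · have h2 : (0:ℝ) < p.1 := lt_of_lt_of_le hx0 h.1
      rw [abs_of_nonneg (div_nonneg hδ2.le h2.le)]
      exact div_le_div_of_nonneg_left hδ2.le hx0 h.1
    · rw [abs_zero]; positivity
  have hFAi : Integrable FA ν :=
    (integrable_const (δ1 / y0)).mono' hFAm.aestronglyMeasurable (ae_of_all _ hFAbd)
  have hFBi : Integrable FB ν :=
    (integrable_const (δ2 / x0)).mono' hFBm.aestronglyMeasurable (ae_of_all _ hFBbd)
  have hsum : ∀ p : ℝ × ℝ,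
      (if x0 ≤ p.1 ∧ y0 ≤ p.2 then max (δ1 / p.2) (δ2 / p.1) else 0) = FA p + FB p := by
    intro p
    simp only [hFA, hFB]
    by_cases h1 : x0 ≤ p.1 ∧ y0 ≤ p.2
    · have hp1 : (0:ℝ) < p.1 := lt_of_lt_of_le hx0 h1.1
      have hp2 : (0:ℝ) < p.2 := lt_of_lt_of_le hy0 h1.2
      by_cases h2 : δ1 * p.1 ≤ δ2 * p.2
      · rw [if_pos h1, if_neg (fun h => absurd h2 (not_le.mpr h.2.2)),
          if_pos ⟨h1.1, h1.2, h2⟩, zero_add]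
        refine max_eq_right ?_
        rw [div_le_div_iff₀ hp2 hp1]
        linarith
      · rw [if_pos h1, if_pos ⟨h1.1, h1.2, not_le.mp h2⟩,
          if_neg (fun h => h2 h.2.2), add_zero]
        refine max_eq_left ?_
        rw [div_le_div_iff₀ hp1 hp2]
        nlinarith [not_le.mp h2]
    · rw [if_neg h1, if_neg (fun h => h1 ⟨h.1, h.2.1⟩),
        if_neg (fun h => h1 ⟨h.1, h.2.1⟩), add_zero]
  have hstep : ∫ p, (if x0 ≤ p.1 ∧ y0 ≤ p.2 then max (δ1 / p.2) (δ2 / p.1) else 0) ∂ν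
      = (∫ p, FA p ∂ν) + ∫ p, FB p ∂ν := by
    rw [← integral_add hFAi hFBi]
    exact integral_congr_ae (ae_of_all _ hsum)
  rw [hstep]
  -- compute ∫ FA
  have hinnerA : ∀ y : ℝ, (∫ x, FA (x, y) ∂(expMeasure a))
      = if y0 ≤ y then (δ1 / y) * Real.exp (-(a * (δ2 * y / δ1))) else 0 := by
    intro y
    by_cases hy : y0 ≤ y
    · have hypos : 0 < y := lt_of_lt_of_le hy0 hy
      have hiff : ∀ x : ℝ, FA (x, y) = if δ2 * y / δ1 < x then δ1 / y else 0 := by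
        intro x
        simp only [hFA]
        by_cases h : δ2 * y / δ1 < x
        · rw [if_pos h, if_pos]
          refine ⟨?_, hy, (div_lt_iff₀' hδ1).mp h⟩
          have h1 : x0 < δ2 * y0 / δ1 := (lt_div_iff₀' hδ1).mpr hreg
          have h2 : δ2 * y0 / δ1 ≤ δ2 * y / δ1 := by gcongr
          linarith
        · rw [if_neg h, if_neg]
          rintro ⟨-, -, hlt⟩
          exact h ((div_lt_iff₀' hδ1).mpr hlt)
      rw [if_pos hy]
      calc (∫ x, FA (x, y) ∂(expMeasure a))
          = ∫ x, (if δ2 * y / δ1 < x then δ1 / y else 0) ∂(expMeasure a) :=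
            integral_congr_ae (ae_of_all _ hiff)
        _ = (δ1 / y) * Real.exp (-(a * (δ2 * y / δ1))) :=
            expMeasure_tail_lt ha (by positivity)
    · rw [if_neg hy]
      have : ∀ x : ℝ, FA (x, y) = 0 := fun x => if_neg (fun h => hy h.2.1)
      rw [integral_congr_ae (ae_of_all _ this), integral_zero]
  have hA : ∫ p, FA p ∂ν = b * δ1 * expInt ((b + a * δ2 / δ1) * y0) := by
    rw [hν] at hFAi ⊢
    rw [integral_prod_symm FA hFAi]
    calc (∫ y, ∫ x, FA (x, y) ∂(expMeasure a) ∂(expMeasure b))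
        = ∫ y, (if y0 ≤ y then (δ1 / y) * Real.exp (-(a * (δ2 * y / δ1))) else 0)
            ∂(expMeasure b) := integral_congr_ae (ae_of_all _ hinnerA)
      _ = b * δ1 * expInt ((b + a * δ2 / δ1) * y0) := outerA ha hb hδ1 hδ2 hy0
  -- compute ∫ FB
  have hinnerB : ∀ x : ℝ, (∫ y, FB (x, y) ∂(expMeasure b))
      = if x0 ≤ x then (δ2 / x) * Real.exp (-(b * max y0 (δ1 * x / δ2))) else 0 := by
    intro x
    by_cases hx : x0 ≤ x
    · have hxpos : 0 < x := lt_of_lt_of_le hx0 hx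
      have hiff : ∀ y : ℝ, FB (x, y) = if max y0 (δ1 * x / δ2) ≤ y then δ2 / x else 0 := by
        intro y
        simp only [hFB]
        by_cases h : max y0 (δ1 * x / δ2) ≤ y
        · rw [if_pos h, if_pos]
          rcases max_le_iff.mp h with ⟨hy1, hy2⟩
          exact ⟨hx, hy1, by nlinarith [(div_le_iff₀ hδ2).mp hy2]⟩
        · rw [if_neg h, if_neg]
          rintro ⟨-, hy1, hy2⟩
          exact h (max_le hy1 ((div_le_iff₀ hδ2).mpr (by nlinarith)))
      rw [if_pos hx]
      calc (∫ y, FB (x, y) ∂(expMeasure b))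
          = ∫ y, (if max y0 (δ1 * x / δ2) ≤ y then δ2 / x else 0) ∂(expMeasure b) :=
            integral_congr_ae (ae_of_all _ hiff)
        _ = (δ2 / x) * Real.exp (-(b * max y0 (δ1 * x / δ2))) :=
            expMeasure_tail hb (lt_max_of_lt_left hy0)
    · rw [if_neg hx]
      have : ∀ y : ℝ, FB (x, y) = 0 := fun y => if_neg (fun h => hx h.1)
      rw [integral_congr_ae (ae_of_all _ this), integral_zero]
  have hB : ∫ p, FB p ∂ν
      = a * δ2 * Real.exp (-(b * y0)) * (expInt (a * x0) - expInt (a * (δ2 * y0 / δ1)))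
        + a * δ2 * expInt ((a + b * δ1 / δ2) * (δ2 * y0 / δ1)) := by
    rw [hν] at hFBi ⊢
    rw [integral_prod FB hFBi]
    calc (∫ x, ∫ y, FB (x, y) ∂(expMeasure b) ∂(expMeasure a))
        = ∫ x, (if x0 ≤ x then (δ2 / x) * Real.exp (-(b * max y0 (δ1 * x / δ2))) else 0)
            ∂(expMeasure a) := integral_congr_ae (ae_of_all _ hinnerB)
      _ = _ := outerB ha hb hδ1 hδ2 hx0 hy0 hreg
  rw [hA, hB]; ring

end Helpers

open scoped ENNReal NNReal
open Set Real
set_option maxHeartbeats 1000000 in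
/-- maximum average relay output power of the untruncated minimum short-term
allocation `P_{R,st}` in the regime `δ2 y0 > δ1 x0`. -/
theorem stmt_11 {Ωsp : Type*} [MeasurableSpace Ωsp] (μ : Measure Ωsp)
    [IsProbabilityMeasure μ]
    (X Y : Ωsp → ℝ) (hX : Measurable X) (hY : Measurable Y)
    (hindep : IndepFun X Y μ)
    (ΩX ΩY δ1 δ2 x0 y0 : ℝ)
    (hΩX : 0 < ΩX) (hΩY : 0 < ΩY) (hδ1 : 0 < δ1) (hδ2 : 0 < δ2)
    (hx0 : 0 < x0) (hy0 : 0 < y0)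
    (hreg : δ1 * x0 < δ2 * y0)
    (hXdist : Measure.map X μ = expMeasure (1 / ΩX))
    (hYdist : Measure.map Y μ = expMeasure (1 / ΩY))
    (PRst : ℝ → ℝ → ℝ)
    (hPRst : ∀ x y, PRst x y =
      if x0 ≤ x ∧ y0 ≤ y then max (δ1 / y) (δ2 / x) else 0) :
    ∫ ω, PRst (X ω) (Y ω) ∂μ =
      (δ2 / ΩX) * Real.exp (-y0 / ΩY) *
        (expInt (x0 / ΩX) - expInt (δ2 * y0 / (δ1 * ΩX)))
      + (δ1 / ΩY + δ2 / ΩX) * expInt (y0 / ΩY + δ2 * y0 / (δ1 * ΩX)) := by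
  have ha : (0:ℝ) < 1 / ΩX := by positivity
  have hb : (0:ℝ) < 1 / ΩY := by positivity
  set F : ℝ × ℝ → ℝ :=
    fun p => if x0 ≤ p.1 ∧ y0 ≤ p.2 then max (δ1 / p.2) (δ2 / p.1) else 0 with hF
  have hFm : Measurable F := by
    refine Measurable.ite ?_
      ((measurable_const.div measurable_snd).max (measurable_const.div measurable_fst))
      measurable_const
    exact MeasurableSet.inter (measurable_fst measurableSet_Ici)
      (measurable_snd measurableSet_Ici)
  have hmap : μ.map (fun ω => (X ω, Y ω))
      = (expMeasure (1 / ΩX)).prod (expMeasure (1 / ΩY)) := by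
    rw [← hXdist, ← hYdist]
    exact (indepFun_iff_map_prod_eq_prod_map_map hX.aemeasurable hY.aemeasurable).mp hindep
  have hL : ∫ ω, PRst (X ω) (Y ω) ∂μ
      = ∫ p, F p ∂((expMeasure (1 / ΩX)).prod (expMeasure (1 / ΩY))) := by
    rw [← hmap, integral_map (hX.prodMk hY).aemeasurable hFm.aestronglyMeasurable]
    refine integral_congr_ae (ae_of_all _ fun ω => ?_)
    simp only [hPRst, hF]
  rw [hL, hF, main_prod ha hb hδ1 hδ2 hx0 hy0 hreg]
  have e1 : (1 / ΩX) * x0 = x0 / ΩX := by field_simp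
  have e2 : (1 / ΩX) * (δ2 * y0 / δ1) = δ2 * y0 / (δ1 * ΩX) := by
    rw [div_mul_div_comm, one_mul, mul_comm ΩX δ1]
  have e3 : ((1 / ΩX) + (1 / ΩY) * δ1 / δ2) * (δ2 * y0 / δ1)
      = y0 / ΩY + δ2 * y0 / (δ1 * ΩX) := by
    field_simp; ring
  have e4 : ((1 / ΩY) + (1 / ΩX) * δ2 / δ1) * y0 = y0 / ΩY + δ2 * y0 / (δ1 * ΩX) := by
    field_simp
  have e5 : -((1 / ΩY) * y0) = -y0 / ΩY := by field_simp
  rw [e1, e2, e3, e4, e5]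
  field_simp
  ring
end

section
/- Let X and Y be independent exponentially distributed random variables with means Ω_X > 0 and Ω_Y > 0, and let δ1, δ2, x0, y0 > 0. If the relay transmits with the untruncated allocation P_{R,st}(x,y) = max{δ1/y, δ2/x} for x ≥ x0, y ≥ y0 (and 0 otherwise), then the system outage event is exactly the complement of {X ≥ x0 and Y ≥ y0}, and the system outage probability attains its minimum value 1 − e^{−x0/Ω_X}·e^{−y0/Ω_Y}. -/
open MeasureTheory ProbabilityTheory

lemma expMeasure_singleton' (r x : ℝ) : expMeasure r {x} = 0 := by
  rw [expMeasure, gammaMeasure]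
  exact (withDensity_absolutelyContinuous _ _) (Real.volume_singleton)

lemma expMeasure_Ici' {r : ℝ} (hr : 0 < r) {x : ℝ} (hx : 0 ≤ x) :
    expMeasure r (Set.Ici x) = ENNReal.ofReal (Real.exp (-(r * x))) := by
  haveI := isProbabilityMeasure_expMeasure hr
  have hIic : expMeasure r (Set.Iic x) =
      ENNReal.ofReal (1 - Real.exp (-(r * x))) := by
    rw [← ofReal_cdf]
    congr 1
    rw [cdf_expMeasure_eq hr x, if_pos hx]
  have hIoi : expMeasure r (Set.Ioi x) =
      ENNReal.ofReal (Real.exp (-(r * x))) := by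
    have hc : expMeasure r (Set.Ioi x) = 1 - expMeasure r (Set.Iic x) := by
      rw [← Set.compl_Iic, prob_compl_eq_one_sub measurableSet_Iic]
    rw [hc, hIic, ENNReal.ofReal_sub _ (Real.exp_nonneg _), ENNReal.ofReal_one,
      ENNReal.sub_sub_cancel ENNReal.one_ne_top]
    exact ENNReal.ofReal_le_one.2 (Real.exp_le_one_iff.2 (by nlinarith))
  have h1 : expMeasure r (Set.Ici x) ≤ expMeasure r (Set.Ioi x) + expMeasure r {x} := by
    rw [← Set.Ioi_insert, Set.insert_eq]
    exact (measure_union_le _ _).trans_eq (add_comm _ _)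
  have h2 : expMeasure r (Set.Ioi x) ≤ expMeasure r (Set.Ici x) :=
    measure_mono Set.Ioi_subset_Ici_self
  rw [expMeasure_singleton', add_zero] at h1
  rw [le_antisymm h1 h2, hIoi]

/-- with the untruncated allocation `P_{R,st}(x,y) = max (δ1/y) (δ2/x)` on
`{x ≥ x0, y ≥ y0}` (and `0` otherwise), the system outage event is exactly the complement
of `{X ≥ x0 ∧ Y ≥ y0}`, and the system outage probability attains its minimum value
`1 - e^{-x0/Ω_X} e^{-y0/Ω_Y}` (no channel-state-dependent relay allocation does better). -/
theorem stmt_15 {Ωsp : Type*} [MeasurableSpace Ωsp] (μ : Measure Ωsp)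
    [IsProbabilityMeasure μ]
    (X Y : Ωsp → ℝ) (hX : Measurable X) (hY : Measurable Y)
    (hindep : IndepFun X Y μ)
    (ΩX ΩY δ1 δ2 x0 y0 : ℝ)
    (hΩX : 0 < ΩX) (hΩY : 0 < ΩY) (hδ1 : 0 < δ1) (hδ2 : 0 < δ2)
    (hx0 : 0 < x0) (hy0 : 0 < y0)
    (hXdist : Measure.map X μ = expMeasure (1 / ΩX))
    (hYdist : Measure.map Y μ = expMeasure (1 / ΩY))
    (PRst : ℝ → ℝ → ℝ)
    (hPRst : ∀ x y, PRst x y =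
      if x0 ≤ x ∧ y0 ≤ y then max (δ1 / y) (δ2 / x) else 0) :
    ({ω | ¬(x0 ≤ X ω ∧ y0 ≤ Y ω) ∨
        PRst (X ω) (Y ω) * Y ω < δ1 ∨ PRst (X ω) (Y ω) * X ω < δ2} =
      {ω | x0 ≤ X ω ∧ y0 ≤ Y ω}ᶜ) ∧
    (μ {ω | ¬(x0 ≤ X ω ∧ y0 ≤ Y ω) ∨
        PRst (X ω) (Y ω) * Y ω < δ1 ∨ PRst (X ω) (Y ω) * X ω < δ2} =
      ENNReal.ofReal (1 - Real.exp (-x0 / ΩX) * Real.exp (-y0 / ΩY))) ∧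
    (∀ P : ℝ → ℝ → ℝ, (∀ x y, 0 ≤ P x y) →
      μ {ω | ¬(x0 ≤ X ω ∧ y0 ≤ Y ω) ∨
          P (X ω) (Y ω) * Y ω < δ1 ∨ P (X ω) (Y ω) * X ω < δ2} ≥
        ENNReal.ofReal (1 - Real.exp (-x0 / ΩX) * Real.exp (-y0 / ΩY))) := by
  -- the good event as an intersection of preimages
  have hSeq : {ω | x0 ≤ X ω ∧ y0 ≤ Y ω} = X ⁻¹' Set.Ici x0 ∩ Y ⁻¹' Set.Ici y0 := rfl
  -- its probability
  have hXIci : μ (X ⁻¹' Set.Ici x0) = ENNReal.ofReal (Real.exp (-x0 / ΩX)) := by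
    rw [← Measure.map_apply hX measurableSet_Ici, hXdist,
      expMeasure_Ici' (by positivity) hx0.le]
    congr 1
    field_simp
  have hYIci : μ (Y ⁻¹' Set.Ici y0) = ENNReal.ofReal (Real.exp (-y0 / ΩY)) := by
    rw [← Measure.map_apply hY measurableSet_Ici, hYdist,
      expMeasure_Ici' (by positivity) hy0.le]
    congr 1
    field_simp
  have hgood : μ {ω | x0 ≤ X ω ∧ y0 ≤ Y ω} =
      ENNReal.ofReal (Real.exp (-x0 / ΩX) * Real.exp (-y0 / ΩY)) := by
    rw [hSeq, hindep.measure_inter_preimage_eq_mul _ _ measurableSet_Ici measurableSet_Ici,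
      hXIci, hYIci, ENNReal.ofReal_mul (Real.exp_nonneg _)]
  have hgoodmeas : MeasurableSet {ω | x0 ≤ X ω ∧ y0 ≤ Y ω} := by
    rw [hSeq]
    exact (hX measurableSet_Ici).inter (hY measurableSet_Ici)
  have hcompl : μ ({ω | x0 ≤ X ω ∧ y0 ≤ Y ω}ᶜ) =
      ENNReal.ofReal (1 - Real.exp (-x0 / ΩX) * Real.exp (-y0 / ΩY)) := by
    rw [prob_compl_eq_one_sub hgoodmeas, hgood,
      ENNReal.ofReal_sub _ (by positivity), ENNReal.ofReal_one]
  have hset : {ω | ¬(x0 ≤ X ω ∧ y0 ≤ Y ω) ∨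
      PRst (X ω) (Y ω) * Y ω < δ1 ∨ PRst (X ω) (Y ω) * X ω < δ2} =
      {ω | x0 ≤ X ω ∧ y0 ≤ Y ω}ᶜ := by
    ext ω
    simp only [Set.mem_setOf_eq, Set.mem_compl_iff]
    constructor
    · rintro (h | h | h)
      · exact h
      · intro hc
        rw [hPRst, if_pos hc] at h
        have hYpos : 0 < Y ω := lt_of_lt_of_le hy0 hc.2
        have : δ1 / Y ω * Y ω ≤ max (δ1 / Y ω) (δ2 / X ω) * Y ω :=
          mul_le_mul_of_nonneg_right (le_max_left _ _) hYpos.le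
        rw [div_mul_cancel₀ _ hYpos.ne'] at this
        exact absurd (lt_of_le_of_lt this h) (lt_irrefl _)
      · intro hc
        rw [hPRst, if_pos hc] at h
        have hXpos : 0 < X ω := lt_of_lt_of_le hx0 hc.1
        have : δ2 / X ω * X ω ≤ max (δ1 / Y ω) (δ2 / X ω) * X ω :=
          mul_le_mul_of_nonneg_right (le_max_right _ _) hXpos.le
        rw [div_mul_cancel₀ _ hXpos.ne'] at this
        exact absurd (lt_of_le_of_lt this h) (lt_irrefl _)
    · exact fun h => Or.inl h
  refine ⟨hset, by rw [hset]; exact hcompl, ?_⟩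
  intro P hP
  calc μ {ω | ¬(x0 ≤ X ω ∧ y0 ≤ Y ω) ∨
          P (X ω) (Y ω) * Y ω < δ1 ∨ P (X ω) (Y ω) * X ω < δ2}
      ≥ μ ({ω | x0 ≤ X ω ∧ y0 ≤ Y ω}ᶜ) :=
        measure_mono (fun ω h => Or.inl h)
    _ = ENNReal.ofReal (1 - Real.exp (-x0 / ΩX) * Real.exp (-y0 / ΩY)) := hcompl
end
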